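/- The polynomials t_k(x) = Σ_{j ≥ 0} d(k,j)(x−1)^{k−j−1} satisfy t_1(x) = 1 and, for every k > 1, t_k(x) = Σ_{ℓ ∣ k, ℓ < k} a(k/ℓ) (x−1)^{k−ℓ−1} t_ℓ(x). -/

import Mathlib

/-- `dcoef a m k`: the sum of `∏ a ℓᵢ` over `k`-tuples of integers `ℓᵢ ≥ 2`
with product `m`. -/
noncomputable def dcoef (a : ℕ → ℂ) (m k : ℕ) : ℂ :=
  ∑ t ∈ (Fintype.piFinset fun _ : Fin k => Finset.Icc 2 m).filter
      (fun t => ∏ i, t i = m), ∏ i, a (t i)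

section Aux
open Polynomial Finset

lemma dcoef_one_zero (a : ℕ → ℂ) : dcoef a 1 0 = 1 := by
  simp [dcoef]

lemma dcoef_zero (a : ℕ → ℂ) {m : ℕ} (hm : 1 < m) : dcoef a m 0 = 0 := by
  simp only [dcoef]
  rw [Finset.sum_eq_zero]
  intro t ht
  simp only [mem_filter] at ht
  simp only [Finset.prod_of_isEmpty] at ht
  omega

lemma dcoef_eq_zero (a : ℕ → ℂ) {m j : ℕ} (hm : m < 2 ^ j) : dcoef a m j = 0 := by
  unfold dcoef
  rw [Finset.sum_eq_zero]
  intro t ht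
  simp only [mem_filter, Fintype.mem_piFinset, Finset.mem_Icc] at ht
  exfalso
  have h2 : (2:ℕ)^j ≤ ∏ i, t i := by
    calc (2:ℕ)^j = ∏ _i : Fin j, 2 := by simp
    _ ≤ ∏ i, t i := Finset.prod_le_prod' (fun i _ => (ht.1 i).1)
  omega

lemma dcoef_bound (a : ℕ → ℂ) (m k N : ℕ) (hm : 1 ≤ m) (hN : m ≤ N) :
    ∑ t ∈ (Fintype.piFinset fun _ : Fin k => Finset.Icc 2 N).filter
      (fun t => ∏ i, t i = m), ∏ i, a (t i) = dcoef a m k := by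
  unfold dcoef
  congr 1
  ext t
  simp only [mem_filter, Fintype.mem_piFinset, Finset.mem_Icc]
  constructor
  · rintro ⟨h1, h2⟩
    refine ⟨fun i => ⟨(h1 i).1, ?_⟩, h2⟩
    exact Nat.le_of_dvd hm (h2 ▸ Finset.dvd_prod_of_mem _ (mem_univ i))
  · rintro ⟨h1, h2⟩
    exact ⟨fun i => ⟨(h1 i).1, le_trans (h1 i).2 hN⟩, h2⟩

lemma dcoef_succ (a : ℕ → ℂ) {k : ℕ} (hk : 1 < k) (j : ℕ) :
    dcoef a k (j + 1) = ∑ l ∈ k.properDivisors, a (k / l) * dcoef a l j := by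
  have hk0 : 0 < k := by omega
  have step1 : dcoef a k (j+1) =
      ∑ p ∈ ((Finset.Icc 2 k) ×ˢ Fintype.piFinset fun _ : Fin j => Finset.Icc 2 k).filter
        (fun p => p.1 * ∏ i, p.2 i = k), a p.1 * ∏ i, a (p.2 i) := by
    unfold dcoef
    refine Finset.sum_nbij' (fun t => (t 0, Fin.tail t)) (fun p => Fin.cons p.1 p.2)
      ?_ ?_ ?_ ?_ ?_
    · intro t ht
      simp only [mem_filter, Fintype.mem_piFinset, Finset.mem_product] at *
      refine ⟨⟨ht.1 0, fun i => ht.1 i.succ⟩, ?_⟩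
      rw [← ht.2, Fin.prod_univ_succ]; rfl
    · intro p hp
      simp only [mem_filter, Fintype.mem_piFinset, Finset.mem_product] at *
      refine ⟨fun i => ?_, ?_⟩
      · cases i using Fin.cases with
        | zero => simpa using hp.1.1
        | succ i => simpa using hp.1.2 i
      · rw [Fin.prod_univ_succ]; simpa using hp.2
    · intro t _; exact Fin.cons_self_tail t
    · intro p _; simp
    · intro t _; rw [Fin.prod_univ_succ]; rfl
  rw [step1, Finset.sum_filter, Finset.sum_product]
  have hsub : k.divisors.filter (fun m => 2 ≤ m) ⊆ Finset.Icc 2 k := by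
    intro m hm
    simp only [mem_filter, Nat.mem_divisors] at hm
    exact Finset.mem_Icc.mpr ⟨hm.2, Nat.le_of_dvd hk0 hm.1.1⟩
  rw [← Finset.sum_subset hsub (fun m hmI hmD => ?_)]
  · refine Finset.sum_nbij' (fun m => k / m) (fun l => k / l) ?_ ?_ ?_ ?_ ?_
    · intro m hm
      simp only [mem_filter, Nat.mem_divisors] at hm
      exact Nat.mem_properDivisors.mpr
        ⟨Nat.div_dvd_of_dvd hm.1.1, Nat.div_lt_self hk0 (by omega)⟩
    · intro l hl
      rw [Nat.mem_properDivisors] at hl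
      obtain ⟨⟨q, rfl⟩, hlt⟩ := hl
      have hl0 : 0 < l := by
        rcases Nat.eq_zero_or_pos l with h | h
        · simp [h] at hlt
        · exact h
      have hq : 1 < q := by
        by_contra h
        push_neg at h
        interval_cases q <;> omega
      simp only [mem_filter, Nat.mem_divisors]
      rw [Nat.mul_div_cancel_left _ hl0]
      exact ⟨⟨⟨l, mul_comm l q⟩, by omega⟩, hq⟩
    · intro m hm
      simp only [mem_filter, Nat.mem_divisors] at hm
      exact Nat.div_div_self hm.1.1 (by omega)
    · intro l hl
      rw [Nat.mem_properDivisors] at hl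
      exact Nat.div_div_self hl.1 (by omega)
    · intro m hm
      simp only [mem_filter, Nat.mem_divisors] at hm
      obtain ⟨⟨hdvd, -⟩, h2m⟩ := hm
      have hmpos : 0 < m := by omega
      rw [Nat.div_div_self hdvd (by omega)]
      have hdm : 1 ≤ k / m := Nat.div_pos (Nat.le_of_dvd hk0 hdvd) hmpos
      rw [← dcoef_bound a (k / m) j k hdm (Nat.div_le_self k m), Finset.mul_sum,
        Finset.sum_filter]
      refine Finset.sum_congr rfl fun s _ => ?_
      have hiff : (m * ∏ i, s i = k) ↔ (∏ i, s i = k / m) := by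
        constructor
        · intro h; rw [← h, Nat.mul_div_cancel_left _ hmpos]
        · intro h; rw [h, Nat.mul_div_cancel' hdvd]
      dsimp only
      simp only [hiff]
  · refine Finset.sum_eq_zero fun s _ => ?_
    rw [if_neg]
    intro h
    simp only [mem_filter, Nat.mem_divisors, Finset.mem_Icc] at hmI hmD
    exact hmD ⟨⟨⟨_, h.symm⟩, by omega⟩, hmI.1⟩

end Aux

open Polynomial in
/-- `t_k(x) = ∑_{j ≥ 0} d(k,j) (x-1)^{k-j-1}`.  Since `d(k,j) = 0` for `j ≥ k`
(indeed for all `j > log₂ k`), the sum may be truncated at `j = k - 1`. -/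
noncomputable def tpoly (a : ℕ → ℂ) (k : ℕ) : Polynomial ℂ :=
  ∑ j ∈ Finset.range k, C (dcoef a k j) * (X - 1) ^ (k - j - 1)

open Polynomial in
/-- `t_1(x) = 1` and, for every `k > 1`,
`t_k(x) = ∑_{ℓ ∣ k, ℓ < k} a(k/ℓ) (x-1)^{k-ℓ-1} t_ℓ(x)`. -/
theorem tpoly_recurrence (a : ℕ → ℂ) (ha : a 1 = 1) :
    tpoly a 1 = 1 ∧
    ∀ k : ℕ, 1 < k →
      tpoly a k = ∑ l ∈ k.properDivisors, C (a (k / l)) * (X - 1) ^ (k - l - 1) * tpoly a l := by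
  constructor
  · simp [tpoly, dcoef_one_zero]
  · intro k hk
    obtain ⟨m, rfl⟩ : ∃ m, k = m + 2 := ⟨k - 2, by omega⟩
    have key : ∀ l ∈ (m + 2).properDivisors,
        C (a ((m + 2) / l)) * (X - 1) ^ (m + 2 - l - 1) * tpoly a l
        = ∑ i ∈ Finset.range (m + 1),
            C (a ((m + 2) / l)) * C (dcoef a l i) * (X - 1) ^ (m - i) := by
      intro l hl
      rw [Nat.mem_properDivisors] at hl
      have hl0 : 0 < l := Nat.pos_of_dvd_of_pos hl.1 (by omega)
      have hlm : l ≤ m + 1 := by omega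
      rw [tpoly, Finset.mul_sum]
      rw [Finset.sum_subset (Finset.range_subset_range.mpr hlm) (fun i _ hni => ?_)]
      · refine Finset.sum_congr rfl fun i _ => ?_
        by_cases hil : i < l
        · rw [show m - i = (m + 2 - l - 1) + (l - i - 1) from by omega, pow_add]
          ring
        · have hz : dcoef a l i = 0 :=
            dcoef_eq_zero a (lt_of_le_of_lt (by omega : l ≤ i) (Nat.lt_two_pow_self (n := i)))
          simp [hz]
      · have hz : dcoef a l i = 0 := by
          rw [Finset.mem_range, not_lt] at hni
          exact dcoef_eq_zero a (lt_of_le_of_lt (by omega : l ≤ i) (Nat.lt_two_pow_self (n := i)))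
        simp [hz]
    calc tpoly a (m + 2)
        = ∑ i ∈ Finset.range (m + 1),
            C (dcoef a (m + 2) (i + 1)) * (X - 1) ^ (m - i) := by
          rw [tpoly, Finset.sum_range_succ', dcoef_zero a hk, map_zero, zero_mul, add_zero]
          exact Finset.sum_congr rfl fun i _ => by
            rw [show m + 2 - (i + 1) - 1 = m - i from by omega]
      _ = ∑ i ∈ Finset.range (m + 1), ∑ l ∈ (m + 2).properDivisors,
            C (a ((m + 2) / l)) * C (dcoef a l i) * (X - 1) ^ (m - i) := by
          refine Finset.sum_congr rfl fun i _ => ?_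
          rw [dcoef_succ a hk i, map_sum, Finset.sum_mul]
          exact Finset.sum_congr rfl fun l _ => by rw [map_mul]
      _ = ∑ l ∈ (m + 2).properDivisors, ∑ i ∈ Finset.range (m + 1),
            C (a ((m + 2) / l)) * C (dcoef a l i) * (X - 1) ^ (m - i) := Finset.sum_comm
      _ = _ := (Finset.sum_congr rfl key).symm
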